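/- Let b > a be real numbers and let u ∈ C⁰([a,b] × [0,1]) be a function for which ∂u/∂t(t,x) exists and is continuous on [a,b] × [0,1]. Then for every t ∈ [a,b) for which the one-sided limit lim_{h→0⁺} ( ‖u[t+h]‖_∞ − ‖u[t]‖_∞ )/h exists, the following equality holds: lim_{h→0⁺} ( ‖u[t+h]‖_∞ − ‖u[t]‖_∞ )/h = lim_{h→0⁺} ( ‖u[t] + h·(∂u/∂t)[t]‖_∞ − ‖u[t]‖_∞ )/h. -/

import Mathlib

open Set Filter

private lemma sup_diff_le {f g : ℝ → ℝ} {s : Set ℝ} (hs : s.Nonempty)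
    (hf : BddAbove (f '' s)) (hg : BddAbove (g '' s)) {c : ℝ}
    (h : ∀ x ∈ s, |f x - g x| ≤ c) :
    |sSup (f '' s) - sSup (g '' s)| ≤ c := by
  rw [abs_sub_le_iff]
  constructor
  · have h1 : sSup (f '' s) ≤ sSup (g '' s) + c := by
      apply csSup_le (hs.image f)
      rintro _ ⟨x, hx, rfl⟩
      have h2 : g x ≤ sSup (g '' s) := le_csSup hg ⟨x, hx, rfl⟩
      have := abs_le.mp (h x hx)
      linarith [this.2]
    linarith
  · have h1 : sSup (g '' s) ≤ sSup (f '' s) + c := by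
      apply csSup_le (hs.image g)
      rintro _ ⟨x, hx, rfl⟩
      have h2 : f x ≤ sSup (f '' s) := le_csSup hf ⟨x, hx, rfl⟩
      have := abs_le.mp (h x hx)
      linarith [this.1]
    linarith

/-- **Lemma 4.1, part 2** (Karafyllis–Krstic): for every `t ∈ [a,b)` at which the
one-sided Dini-type limit of `h ↦ (‖u[t+h]‖_∞ - ‖u[t]‖_∞)/h` exists, it equals the
corresponding limit for `h ↦ (‖u[t] + h·∂u/∂t[t]‖_∞ - ‖u[t]‖_∞)/h`. -/
theorem lem4_1_dini
    (a b : ℝ) (hab : a < b) (u ut : ℝ → ℝ → ℝ)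
    (hu_cont : ContinuousOn (fun p : ℝ × ℝ => u p.1 p.2) (Set.Icc a b ×ˢ Set.Icc 0 1))
    (hut : ∀ t ∈ Set.Icc a b, ∀ x ∈ Set.Icc (0:ℝ) 1,
      HasDerivWithinAt (fun τ => u τ x) (ut t x) (Set.Icc a b) t)
    (hut_cont : ContinuousOn (fun p : ℝ × ℝ => ut p.1 p.2) (Set.Icc a b ×ˢ Set.Icc 0 1)) :
    ∀ t ∈ Set.Ico a b, ∀ L : ℝ,
      Tendsto (fun h : ℝ =>
          (sSup ((fun x => |u (t + h) x|) '' Set.Icc 0 1) -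
            sSup ((fun x => |u t x|) '' Set.Icc 0 1)) / h)
        (nhdsWithin 0 (Set.Ioi 0)) (nhds L) →
      Tendsto (fun h : ℝ =>
          (sSup ((fun x => |u t x + h * ut t x|) '' Set.Icc 0 1) -
            sSup ((fun x => |u t x|) '' Set.Icc 0 1)) / h)
        (nhdsWithin 0 (Set.Ioi 0)) (nhds L) := by
  intro t ht L hF1
  have hta : a ≤ t := ht.1
  have htb : t < b := ht.2
  have htab : t ∈ Set.Icc a b := ⟨hta, htb.le⟩
  set D : ℝ → ℝ := fun h =>
    (sSup ((fun x => |u t x + h * ut t x|) '' Set.Icc 0 1) -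
      sSup ((fun x => |u (t + h) x|) '' Set.Icc 0 1)) / h with hD_def
  have hcmp : IsCompact (Set.Icc a b ×ˢ Set.Icc (0:ℝ) 1) :=
    isCompact_Icc.prod isCompact_Icc
  have hUC := hcmp.uniformContinuousOn_of_continuous hut_cont
  rw [Metric.uniformContinuousOn_iff] at hUC
  have hD0 : Tendsto D (nhdsWithin 0 (Set.Ioi 0)) (nhds 0) := by
    rw [NormedAddCommGroup.tendsto_nhds_zero]
    intro ε hε
    obtain ⟨δ, hδ, hδ'⟩ := hUC (ε / 2) (by linarith)
    have hmem : (0:ℝ) ∈ Set.Ico 0 (min δ (b - t)) :=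
      ⟨le_refl 0, lt_min hδ (by linarith)⟩
    filter_upwards [Ioo_mem_nhdsGT_of_mem hmem] with h hh
    obtain ⟨hh0, hh1⟩ := hh
    have hhδ : h < δ := lt_of_lt_of_le hh1 (min_le_left _ _)
    have hhb : t + h ≤ b := by
      have := lt_of_lt_of_le hh1 (min_le_right _ _); linarith
    have hthab : t + h ∈ Set.Icc a b := ⟨by linarith, hhb⟩
    -- pointwise mean value bound
    have key : ∀ x ∈ Set.Icc (0:ℝ) 1,
        |(u t x + h * ut t x) - u (t + h) x| ≤ ε / 2 * h := by
      intro x hx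
      have hconv : Convex ℝ (Set.Icc t (t + h)) := convex_Icc _ _
      have hsub : Set.Icc t (t + h) ⊆ Set.Icc a b :=
        Set.Icc_subset_Icc hta hhb
      have hderiv : ∀ s ∈ Set.Icc t (t + h),
          HasDerivWithinAt (fun τ => u τ x - τ * ut t x)
            (ut s x - ut t x) (Set.Icc t (t + h)) s := by
        intro s hs
        have h1 := (hut s (hsub hs) x hx).mono hsub
        have h2 : HasDerivWithinAt (fun τ : ℝ => τ * ut t x) (ut t x)
            (Set.Icc t (t + h)) s := by
          simpa using (hasDerivWithinAt_id s (Set.Icc t (t + h))).mul_const (ut t x)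
        exact h1.sub h2
      have hbound : ∀ s ∈ Set.Icc t (t + h), ‖ut s x - ut t x‖ ≤ ε / 2 := by
        intro s hs
        have hsab : (s, x) ∈ Set.Icc a b ×ˢ Set.Icc (0:ℝ) 1 := ⟨hsub hs, hx⟩
        have htxab : (t, x) ∈ Set.Icc a b ×ˢ Set.Icc (0:ℝ) 1 := ⟨htab, hx⟩
        have hdist : dist ((s, x) : ℝ × ℝ) ((t, x) : ℝ × ℝ) < δ := by
          rw [Prod.dist_eq]
          simp only [dist_self]
          rw [max_eq_left dist_nonneg, Real.dist_eq]
          have : |s - t| ≤ h := abs_le.mpr ⟨by linarith [hs.1], by linarith [hs.2]⟩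
          linarith
        have := hδ' (s, x) hsab (t, x) htxab hdist
        rw [Real.dist_eq] at this
        exact le_of_lt this
      have hmvt := hconv.norm_image_sub_le_of_norm_hasDerivWithin_le hderiv hbound
        (Set.left_mem_Icc.mpr (by linarith)) (Set.right_mem_Icc.mpr (by linarith))
      rw [Real.norm_eq_abs, Real.norm_eq_abs] at hmvt
      have heq : (u (t + h) x - (t + h) * ut t x) - (u t x - t * ut t x)
          = -((u t x + h * ut t x) - u (t + h) x) := by ring
      rw [heq, abs_neg] at hmvt
      calc |(u t x + h * ut t x) - u (t + h) x| ≤ ε / 2 * |t + h - t| := hmvt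
        _ = ε / 2 * h := by rw [show t + h - t = h by ring, abs_of_pos hh0]
    -- continuity and boundedness of the two profiles
    have hc1 : ContinuousOn (fun x => |u (t + h) x|) (Set.Icc (0:ℝ) 1) := by
      apply ContinuousOn.abs
      exact hu_cont.comp ((continuous_const.prodMk continuous_id).continuousOn)
        (fun x hx => ⟨hthab, hx⟩)
    have hc2 : ContinuousOn (fun x => |u t x + h * ut t x|) (Set.Icc (0:ℝ) 1) := by
      apply ContinuousOn.abs
      apply ContinuousOn.add
      · exact hu_cont.comp ((continuous_const.prodMk continuous_id).continuousOn)
          (fun x hx => ⟨htab, hx⟩)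
      · exact continuousOn_const.mul
          (hut_cont.comp ((continuous_const.prodMk continuous_id).continuousOn)
            (fun x hx => ⟨htab, hx⟩))
    have hbdd1 : BddAbove ((fun x => |u (t + h) x|) '' Set.Icc 0 1) :=
      (isCompact_Icc.image_of_continuousOn hc1).bddAbove
    have hbdd2 : BddAbove ((fun x => |u t x + h * ut t x|) '' Set.Icc 0 1) :=
      (isCompact_Icc.image_of_continuousOn hc2).bddAbove
    have hsup := sup_diff_le (Set.nonempty_Icc.mpr zero_le_one) hbdd2 hbdd1
      (fun x hx => (abs_abs_sub_abs_le_abs_sub _ _).trans (key x hx))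
    -- conclude
    rw [Real.norm_eq_abs, hD_def]
    simp only
    rw [abs_div, abs_of_pos hh0]
    calc _ ≤ (ε / 2 * h) / h := by gcongr
      _ = ε / 2 := by field_simp
      _ < ε := by linarith
  have hsum := hF1.add hD0
  rw [add_zero] at hsum
  refine hsum.congr (fun h => ?_)
  simp only [hD_def]
  rw [← add_div, sub_add_sub_cancel']
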